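/- There exists a universal constant C > 0 with the following property. For every γ > 0, every r ≥ 0, every natural number N ≥ 1 and all real numbers λ_1, …, λ_N satisfying 4·γ·k² ≤ λ_k ≤ γ·π²·k² for 1 ≤ k ≤ N, one has ∑_{k=1}^{N} (1/λ_k) · (1 − e^{−r·λ_k})² ≤ C · √(r/γ). (Temporal regularity estimate for the discrete semigroup, second part of Lemma 3.2.) -/

import Mathlib

open Real Finset

set_option maxHeartbeats 2000000 in
/-- **Temporal regularity estimate for the discrete semigroup** (second part of Lemma 3.2):
there is a universal constant `C` such that whenever `4γk² ≤ λ_k ≤ γπ²k²` for `1 ≤ k ≤ N`,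
`∑_{k=1}^N (1/λ_k)(1 − e^{−rλ_k})² ≤ C·√(r/γ)` for all `r ≥ 0`. -/
theorem temporal_regularity_estimate :
    ∃ C : ℝ, 0 < C ∧
      ∀ γ : ℝ, 0 < γ → ∀ r : ℝ, 0 ≤ r → ∀ N : ℕ, 1 ≤ N → ∀ lam : ℕ → ℝ,
        (∀ k ∈ Finset.Icc 1 N,
          4 * γ * (k : ℝ) ^ 2 ≤ lam k ∧ lam k ≤ γ * π ^ 2 * (k : ℝ) ^ 2) →
        ∑ k ∈ Finset.Icc 1 N, (1 / lam k) * (1 - Real.exp (-r * lam k)) ^ 2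
          ≤ C * Real.sqrt (r / γ) := by
  refine ⟨π ^ 2 + 1, by positivity, ?_⟩
  intro γ hγ r hr N hN lam hlam
  have hC0 : (0:ℝ) ≤ π ^ 2 + 1 := by positivity
  -- dispose of r = 0
  rcases eq_or_lt_of_le hr with hr0 | hr0
  · simp [← hr0]
  -- basic facts
  have hkpos : ∀ k ∈ Finset.Icc 1 N, (0:ℝ) < (k:ℝ) := by
    intro k hk
    have : 1 ≤ k := (Finset.mem_Icc.mp hk).1
    exact_mod_cast Nat.lt_of_lt_of_le Nat.zero_lt_one this
  have hlampos : ∀ k ∈ Finset.Icc 1 N, 0 < lam k := by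
    intro k hk
    have h1 := (hlam k hk).1
    have h2 := hkpos k hk
    nlinarith [mul_pos hγ (mul_pos h2 h2)]
  -- pointwise bound A : term ≤ r^2 * γ * π^2 * k^2
  have termA : ∀ k ∈ Finset.Icc 1 N,
      (1 / lam k) * (1 - Real.exp (-r * lam k)) ^ 2 ≤ r ^ 2 * γ * π ^ 2 * (k:ℝ) ^ 2 := by
    intro k hk
    have hL := hlampos k hk
    have h2 := (hlam k hk).2
    have he1 : Real.exp (-r * lam k) ≤ 1 := by
      apply Real.exp_le_one_iff.mpr; nlinarith
    have he2 : 1 - Real.exp (-r * lam k) ≤ r * lam k := by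
      have h := Real.add_one_le_exp (-(r * lam k))
      rw [show -(r * lam k) = -r * lam k by ring] at h
      linarith
    have hnn : 0 ≤ 1 - Real.exp (-r * lam k) := by linarith
    have hsq : (1 - Real.exp (-r * lam k)) ^ 2 ≤ (r * lam k) ^ 2 := by nlinarith
    have : (1 / lam k) * (1 - Real.exp (-r * lam k)) ^ 2 ≤ (1 / lam k) * (r * lam k) ^ 2 := by
      apply mul_le_mul_of_nonneg_left hsq; positivity
    calc (1 / lam k) * (1 - Real.exp (-r * lam k)) ^ 2
        ≤ (1 / lam k) * (r * lam k) ^ 2 := this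
      _ = r ^ 2 * lam k := by field_simp
      _ ≤ r ^ 2 * (γ * π ^ 2 * (k:ℝ) ^ 2) := by nlinarith [sq_nonneg r]
      _ = r ^ 2 * γ * π ^ 2 * (k:ℝ) ^ 2 := by ring
  -- pointwise bound B : term ≤ (1/(4γ)) * (k²)⁻¹
  have termB : ∀ k ∈ Finset.Icc 1 N,
      (1 / lam k) * (1 - Real.exp (-r * lam k)) ^ 2 ≤ (1 / (4 * γ)) * ((k:ℝ) ^ 2)⁻¹ := by
    intro k hk
    have hL := hlampos k hk
    have h1 := (hlam k hk).1
    have hk0 := hkpos k hk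
    have he0 : 0 < Real.exp (-r * lam k) := Real.exp_pos _
    have he1 : Real.exp (-r * lam k) ≤ 1 := by
      apply Real.exp_le_one_iff.mpr; nlinarith
    have hsq : (1 - Real.exp (-r * lam k)) ^ 2 ≤ 1 := by nlinarith
    have h1' : (1 / lam k) * (1 - Real.exp (-r * lam k)) ^ 2 ≤ 1 / lam k := by
      nlinarith [sq_nonneg (1 - Real.exp (-r * lam k)), one_div_pos.mpr hL]
    have h2' : 1 / lam k ≤ 1 / (4 * γ * (k:ℝ) ^ 2) :=
      one_div_le_one_div_of_le (by positivity) h1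
    calc (1 / lam k) * (1 - Real.exp (-r * lam k)) ^ 2
        ≤ 1 / (4 * γ * (k:ℝ) ^ 2) := le_trans h1' h2'
      _ = (1 / (4 * γ)) * ((k:ℝ) ^ 2)⁻¹ := by
          rw [one_div, one_div, mul_inv]
  -- notation
  set s : ℝ := Real.sqrt (γ * r) with hs
  have hspos : 0 < s := Real.sqrt_pos.mpr (by positivity)
  have hs2 : s ^ 2 = γ * r := Real.sq_sqrt (by positivity)
  have hsqrtrγ : Real.sqrt (r / γ) = s / γ := by
    rw [eq_div_iff hγ.ne']
    rw [show Real.sqrt (r / γ) * γ = Real.sqrt (r / γ) * Real.sqrt (γ ^ 2) by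
      rw [Real.sqrt_sq hγ.le]]
    rw [← Real.sqrt_mul (by positivity)]
    congr 1
    field_simp
  set K : ℕ := ⌊1 / s⌋₊ with hK
  have hKle : (K:ℝ) ≤ 1 / s := Nat.floor_le (by positivity)
  have hKlt : 1 / s < (K:ℝ) + 1 := by
    have := Nat.lt_floor_add_one (1 / s)
    push_cast at this
    exact this
  clear_value K
  clear hK
  -- sum of inverse squares over Icc 1 N is at most 2
  have hinv2 : ∑ k ∈ Finset.Icc 1 N, ((k:ℝ) ^ 2)⁻¹ ≤ 2 := by
    rw [show Finset.Icc 1 N = Finset.Ioc 0 N from rfl]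
    rw [← Finset.sum_Ioc_consecutive _ (Nat.zero_le 1) hN]
    have h1 : ∑ k ∈ Finset.Ioc (0:ℕ) 1, ((k:ℝ) ^ 2)⁻¹ = 1 := by
      rw [show Finset.Ioc (0:ℕ) 1 = {1} by decide]
      norm_num
    have h2 := sum_Ioc_inv_sq_le_sub (α := ℝ) (k := 1) (n := N) one_ne_zero hN
    have hNinv : (0:ℝ) ≤ (N:ℝ)⁻¹ := by positivity
    push_cast at h2
    linarith
  rcases Nat.eq_zero_or_pos K with hK0 | hK1
  · -- K = 0 : γ r > 1, use bound B everywhere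
    have hx1 : 1 / s < 1 := by
      rw [hK0] at hKlt
      push_cast at hKlt
      linarith
    have hsgt1 : 1 < s := by
      rw [div_lt_one hspos] at hx1; exact hx1
    have hsum : ∑ k ∈ Finset.Icc 1 N, (1 / lam k) * (1 - Real.exp (-r * lam k)) ^ 2
        ≤ (1 / (4 * γ)) * 2 := by
      calc ∑ k ∈ Finset.Icc 1 N, (1 / lam k) * (1 - Real.exp (-r * lam k)) ^ 2
          ≤ ∑ k ∈ Finset.Icc 1 N, (1 / (4 * γ)) * ((k:ℝ) ^ 2)⁻¹ :=
            Finset.sum_le_sum termB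
        _ = (1 / (4 * γ)) * ∑ k ∈ Finset.Icc 1 N, ((k:ℝ) ^ 2)⁻¹ := by
            rw [Finset.mul_sum]
        _ ≤ (1 / (4 * γ)) * 2 := by
            apply mul_le_mul_of_nonneg_left hinv2; positivity
    have hhalf : (1:ℝ) / 2 ≤ (π ^ 2 + 1) * s := by nlinarith [Real.pi_gt_three]
    have hmul := mul_le_mul_of_nonneg_right hhalf (inv_pos.mpr hγ).le
    have : (1 / (4 * γ)) * 2 ≤ (π ^ 2 + 1) * (s / γ) := by
      calc (1 / (4 * γ)) * 2 = (1 / 2) * γ⁻¹ := by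
            rw [one_div, mul_inv]; ring
        _ ≤ ((π ^ 2 + 1) * s) * γ⁻¹ := hmul
        _ = (π ^ 2 + 1) * (s / γ) := by rw [div_eq_mul_inv]; ring
    rw [hsqrtrγ]
    linarith
  · -- K ≥ 1 : split the sum at m = min K N
    set m : ℕ := min K N with hm
    have hm1 : 1 ≤ m := le_min hK1 hN
    have hmN : m ≤ N := min_le_right _ _
    have hmK : m ≤ K := min_le_left _ _
    have hsplit : ∑ k ∈ Finset.Icc 1 N, (1 / lam k) * (1 - Real.exp (-r * lam k)) ^ 2
        = (∑ k ∈ Finset.Ioc 0 m, (1 / lam k) * (1 - Real.exp (-r * lam k)) ^ 2)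
          + ∑ k ∈ Finset.Ioc m N, (1 / lam k) * (1 - Real.exp (-r * lam k)) ^ 2 := by
      rw [show Finset.Icc 1 N = Finset.Ioc 0 N from rfl,
        Finset.sum_Ioc_consecutive _ (Nat.zero_le m) hmN]
    have hmemlow : ∀ k ∈ Finset.Ioc 0 m, k ∈ Finset.Icc 1 N := by
      intro k hk
      rw [Finset.mem_Ioc] at hk
      exact Finset.mem_Icc.mpr ⟨hk.1, le_trans hk.2 hmN⟩
    have hmemhigh : ∀ k ∈ Finset.Ioc m N, k ∈ Finset.Icc 1 N := by
      intro k hk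
      rw [Finset.mem_Ioc] at hk
      exact Finset.mem_Icc.mpr ⟨le_trans hm1 hk.1.le, hk.2⟩
    -- low part
    have hlow : ∑ k ∈ Finset.Ioc 0 m, (1 / lam k) * (1 - Real.exp (-r * lam k)) ^ 2
        ≤ π ^ 2 * (s / γ) := by
      have h1 : ∑ k ∈ Finset.Ioc 0 m, (1 / lam k) * (1 - Real.exp (-r * lam k)) ^ 2
          ≤ ∑ k ∈ Finset.Ioc 0 m, r ^ 2 * γ * π ^ 2 * (k:ℝ) ^ 2 :=
        Finset.sum_le_sum fun k hk => termA k (hmemlow k hk)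
      have h2 : ∑ k ∈ Finset.Ioc 0 m, r ^ 2 * γ * π ^ 2 * (k:ℝ) ^ 2
          ≤ (m:ℝ) * (r ^ 2 * γ * π ^ 2 * (m:ℝ) ^ 2) := by
        have := Finset.sum_le_card_nsmul (Finset.Ioc 0 m)
          (fun k => r ^ 2 * γ * π ^ 2 * (k:ℝ) ^ 2) (r ^ 2 * γ * π ^ 2 * (m:ℝ) ^ 2) ?_
        · simpa [Nat.card_Ioc, nsmul_eq_mul] using this
        · intro k hk
          rw [Finset.mem_Ioc] at hk
          have hkm : (k:ℝ) ≤ (m:ℝ) := by exact_mod_cast hk.2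
          have hk0 : (0:ℝ) ≤ (k:ℝ) := Nat.cast_nonneg k
          have hsq : (k:ℝ) ^ 2 ≤ (m:ℝ) ^ 2 := by nlinarith
          exact mul_le_mul_of_nonneg_left hsq (by positivity)
      have hmle : (m:ℝ) ≤ 1 / s := le_trans (by exact_mod_cast hmK) hKle
      have hm0 : (0:ℝ) ≤ (m:ℝ) := Nat.cast_nonneg m
      have hm3 : (m:ℝ) ^ 3 ≤ (1 / s) ^ 3 := pow_le_pow_left₀ hm0 hmle 3
      have ha : (0:ℝ) ≤ r ^ 2 * γ * π ^ 2 := by positivity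
      have h3 : (m:ℝ) * (r ^ 2 * γ * π ^ 2 * (m:ℝ) ^ 2)
          ≤ (1 / s) * (r ^ 2 * γ * π ^ 2 * (1 / s) ^ 2) := by
        calc (m:ℝ) * (r ^ 2 * γ * π ^ 2 * (m:ℝ) ^ 2)
            = r ^ 2 * γ * π ^ 2 * (m:ℝ) ^ 3 := by ring
          _ ≤ r ^ 2 * γ * π ^ 2 * (1 / s) ^ 3 := mul_le_mul_of_nonneg_left hm3 ha
          _ = (1 / s) * (r ^ 2 * γ * π ^ 2 * (1 / s) ^ 2) := by ring
      have hs4 : s ^ 4 = (γ * r) ^ 2 := by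
        rw [show s ^ 4 = (s ^ 2) ^ 2 by ring, hs2]
      have h4 : (1 / s) * (r ^ 2 * γ * π ^ 2 * (1 / s) ^ 2) = π ^ 2 * (s / γ) := by
        field_simp
        linear_combination (-1 : ℝ) * hs4
      linarith
    -- high part
    have hhigh : ∑ k ∈ Finset.Ioc m N, (1 / lam k) * (1 - Real.exp (-r * lam k)) ^ 2
        ≤ (1 / 2) * (s / γ) := by
      have h1 : ∑ k ∈ Finset.Ioc m N, (1 / lam k) * (1 - Real.exp (-r * lam k)) ^ 2
          ≤ ∑ k ∈ Finset.Ioc m N, (1 / (4 * γ)) * ((k:ℝ) ^ 2)⁻¹ :=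
        Finset.sum_le_sum fun k hk => termB k (hmemhigh k hk)
      have h2 : ∑ k ∈ Finset.Ioc m N, ((k:ℝ) ^ 2)⁻¹ ≤ (m:ℝ)⁻¹ - (N:ℝ)⁻¹ :=
        sum_Ioc_inv_sq_le_sub (by omega) hmN
      have h3 : (m:ℝ)⁻¹ - (N:ℝ)⁻¹ ≤ 2 * s := by
        rcases le_total K N with hKN | hNK
        · have hmeq : m = K := min_eq_left hKN
          have hK1' : (1:ℝ) ≤ (K:ℝ) := by exact_mod_cast hK1
          have h2K : (1:ℝ) / s < 2 * (K:ℝ) := by linarith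
          have hKpos : (0:ℝ) < (K:ℝ) := by linarith
          have hKinv : (K:ℝ)⁻¹ ≤ 2 * s := by
            have e : (1 / s) * s = 1 := one_div_mul_cancel hspos.ne'
            have h' := mul_lt_mul_of_pos_right h2K hspos
            rw [inv_eq_one_div, div_le_iff₀ hKpos]
            nlinarith
          have hNinv : (0:ℝ) ≤ (N:ℝ)⁻¹ := by positivity
          rw [hmeq]
          linarith
        · have hmeq : m = N := min_eq_right hNK
          rw [hmeq]
          simp
          positivity
      calc ∑ k ∈ Finset.Ioc m N, (1 / lam k) * (1 - Real.exp (-r * lam k)) ^ 2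
          ≤ ∑ k ∈ Finset.Ioc m N, (1 / (4 * γ)) * ((k:ℝ) ^ 2)⁻¹ := h1
        _ = (1 / (4 * γ)) * ∑ k ∈ Finset.Ioc m N, ((k:ℝ) ^ 2)⁻¹ := by
            rw [Finset.mul_sum]
        _ ≤ (1 / (4 * γ)) * (2 * s) := by
            apply mul_le_mul_of_nonneg_left (le_trans h2 h3); positivity
        _ = (1 / 2) * (s / γ) := by field_simp; ring
    rw [hsqrtrγ, hsplit]
    have hsg : 0 ≤ s / γ := by positivity
    nlinarith [hlow, hhigh]
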